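/- Let Ξ ⊆ ℝ^{p+1} be open and let p : Ξ × ℝ^q → ℝ and u : Ξ × ℝ^q → ℝ^{q×(p+1)} be continuously differentiable and satisfy the pointwise generalized continuity equation ∇_ξ p(ξ,x) + div_x(p(ξ,x) u(ξ,x)) = 0 ∈ ℝ^{p+1} for all (ξ,x) ∈ Ξ × ℝ^q. Let γ : [0,1] → Ξ be continuously differentiable. Then the induced density p^γ(s,x) := p(γ(s),x) and the induced vector field v^γ(s,x) := u(γ(s),x) γ̇(s) ∈ ℝ^q satisfy the pointwise continuity equation ∂_s p^γ(s,x) + div_x(p^γ(s,x) v^γ(s,x)) = 0 for all s ∈ (0,1) and x ∈ ℝ^q. -/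

import Mathlib

open MeasureTheory Set

/-- If a C¹ density `ρ` and C¹ matrix field `u` on an open set
`Ξ ⊆ ℝ^{p+1}` satisfy the pointwise generalized continuity equation
`∇_ξ ρ(ξ,x) + div_x(ρ(ξ,x) u(ξ,x)) = 0`, then for any C¹ curve `γ : [0,1] → Ξ`,
the induced density `ρ^γ(s,x) = ρ(γ(s),x)` and induced vector field
`v^γ(s,x) = u(γ(s),x) γ̇(s)` satisfy the pointwise continuity equation on `(0,1) × ℝ^q`. -/
theorem gce_induces_ce_pointwise (p q : ℕ)
    (Ξ : Set (Fin (p + 1) → ℝ)) (hΞ : IsOpen Ξ)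
    (ρ : (Fin (p + 1) → ℝ) → (Fin q → ℝ) → ℝ)
    (u : (Fin (p + 1) → ℝ) → (Fin q → ℝ) → Fin q → Fin (p + 1) → ℝ)
    (hρ : ContDiffOn ℝ 1
      (fun z : (Fin (p + 1) → ℝ) × (Fin q → ℝ) => ρ z.1 z.2) (Ξ ×ˢ univ))
    (hu : ContDiffOn ℝ 1
      (fun z : (Fin (p + 1) → ℝ) × (Fin q → ℝ) => u z.1 z.2) (Ξ ×ˢ univ))
    -- pointwise generalized continuity equation on Ξ × ℝ^q :
    -- ∂_{ξ_i} ρ(ξ,x) + Σ_j ∂_{x_j} ( ρ(ξ,x) u(ξ,x)_{j i} ) = 0 for every component i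
    (hGCE : ∀ ξ ∈ Ξ, ∀ x : Fin q → ℝ, ∀ i : Fin (p + 1),
      fderiv ℝ (fun ξ' => ρ ξ' x) ξ (Pi.single i 1)
        + ∑ j : Fin q,
            fderiv ℝ (fun x' => ρ ξ x' * u ξ x' j i) x (Pi.single j 1) = 0)
    (γ : ℝ → Fin (p + 1) → ℝ) (hγ : ContDiffOn ℝ 1 γ (Icc 0 1))
    (hγΞ : ∀ s ∈ Icc (0 : ℝ) 1, γ s ∈ Ξ) :
    -- pointwise continuity equation for ρ^γ(s,x) = ρ(γ(s),x) and
    -- v^γ(s,x) = u(γ(s),x) γ̇(s), i.e. v^γ(s,x)_j = Σ_i u(γ(s),x)_{j i} γ̇(s)_i :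
    ∀ s ∈ Ioo (0 : ℝ) 1, ∀ x : Fin q → ℝ,
      deriv (fun s' => ρ (γ s') x) s
        + ∑ j : Fin q,
            fderiv ℝ
              (fun x' => ρ (γ s) x' * ∑ i : Fin (p + 1), u (γ s) x' j i * deriv γ s i)
              x (Pi.single j 1) = 0 := by
  intro s hs x
  set ξ := γ s with hξdef
  have hξΞ : ξ ∈ Ξ := hγΞ s (Ioo_subset_Icc_self hs)
  set c : Fin (p + 1) → ℝ := deriv γ s with hc
  -- joint differentiability at (ξ, x)
  have hmem : Ξ ×ˢ (univ : Set (Fin q → ℝ)) ∈ nhds (ξ, x) :=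
    (hΞ.prod isOpen_univ).mem_nhds ⟨hξΞ, trivial⟩
  have hρCA : ContDiffAt ℝ 1 (fun z : (Fin (p + 1) → ℝ) × (Fin q → ℝ) => ρ z.1 z.2) (ξ, x) :=
    (hρ (ξ, x) ⟨hξΞ, trivial⟩).contDiffAt hmem
  have huCA : ContDiffAt ℝ 1 (fun z : (Fin (p + 1) → ℝ) × (Fin q → ℝ) => u z.1 z.2) (ξ, x) :=
    (hu (ξ, x) ⟨hξΞ, trivial⟩).contDiffAt hmem
  have hρD : DifferentiableAt ℝ (fun z : (Fin (p + 1) → ℝ) × (Fin q → ℝ) => ρ z.1 z.2) (ξ, x) :=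
    hρCA.differentiableAt one_ne_zero
  have huD : ∀ j i, DifferentiableAt ℝ
      (fun z : (Fin (p + 1) → ℝ) × (Fin q → ℝ) => u z.1 z.2 j i) (ξ, x) := by
    intro j i
    have := huCA.differentiableAt one_ne_zero
    exact ((differentiableAt_pi.mp ((differentiableAt_pi.mp this) j)) i)
  have hg : DifferentiableAt ℝ (fun ξ' => ρ ξ' x) ξ :=
    by have := hρD.comp ξ ((differentiableAt_id (𝕜 := ℝ) (x := ξ)).prodMk (differentiableAt_const x)); exact this
  have hρx : DifferentiableAt ℝ (fun x' => ρ ξ x') x :=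
    hρD.comp x ((differentiableAt_const ξ).prodMk differentiableAt_id)
  have hux : ∀ j i, DifferentiableAt ℝ (fun x' => u ξ x' j i) x := fun j i =>
    (huD j i).comp x ((differentiableAt_const ξ).prodMk differentiableAt_id)
  -- derivative of γ at s
  have hγs : DifferentiableAt ℝ γ s := by
    have : ContDiffAt ℝ 1 γ s :=
      (hγ s (Ioo_subset_Icc_self hs)).contDiffAt (Icc_mem_nhds hs.1 hs.2)
    exact this.differentiableAt one_ne_zero
  have hγ' : HasDerivAt γ c s := hγs.hasDerivAt
  -- chain rule for deriv term
  have hderiv : deriv (fun s' => ρ (γ s') x) s = fderiv ℝ (fun ξ' => ρ ξ' x) ξ c :=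
    ((hg.hasFDerivAt).comp_hasDerivAt s hγ').deriv
  -- basis expansion of c
  have hcsum : c = ∑ i : Fin (p + 1), c i • (Pi.single i 1 : Fin (p+1) → ℝ) := by
    refine ((Finset.univ_sum_single c).symm).trans (Finset.sum_congr rfl fun i _ => ?_)
    ext j
    simp [Pi.single_apply, mul_ite]
  have hderiv2 : fderiv ℝ (fun ξ' => ρ ξ' x) ξ c
      = ∑ i : Fin (p + 1), c i * fderiv ℝ (fun ξ' => ρ ξ' x) ξ (Pi.single i 1) := by
    conv_lhs => rw [hcsum]
    rw [map_sum]
    simp [smul_eq_mul]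
  -- divergence term
  have hdiv : ∀ j : Fin q,
      fderiv ℝ (fun x' => ρ ξ x' * ∑ i : Fin (p + 1), u ξ x' j i * c i) x (Pi.single j 1)
      = ∑ i : Fin (p + 1), c i * fderiv ℝ (fun x' => ρ ξ x' * u ξ x' j i) x (Pi.single j 1) := by
    intro j
    have hfun : (fun x' => ρ ξ x' * ∑ i : Fin (p + 1), u ξ x' j i * c i)
        = fun x' => ∑ i : Fin (p + 1), (ρ ξ x' * u ξ x' j i) * c i := by
      funext x'
      rw [Finset.mul_sum]
      exact Finset.sum_congr rfl fun i _ => by ring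
    rw [hfun, fderiv_fun_sum (fun i _ => ((hρx.fun_mul (hux j i)).mul_const (c i)))]
    rw [ContinuousLinearMap.sum_apply]
    refine Finset.sum_congr rfl fun i _ => ?_
    rw [fderiv_mul_const (hρx.fun_mul (hux j i))]
    simp [smul_eq_mul, mul_comm]
  rw [hderiv, hderiv2]
  simp only [hdiv]
  rw [Finset.sum_comm]
  rw [← Finset.sum_add_distrib]
  refine Finset.sum_eq_zero fun i _ => ?_
  rw [← Finset.mul_sum, ← mul_add, hGCE ξ hξΞ x i, mul_zero]
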